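/- arXiv:2604.09786 — 4 statements merged into one kernel-verified Lean document; each statement's English description precedes it below -/
import Mathlib

section
/- Let X ⊆ ℝ^d be complete. Then for every C ∈ 𝒦(X), the set of extreme points of C is contained in X, i.e., extremePoints ℝ C ⊆ X. -/
/-- The point-generated convex lattice `𝒦(X)`: the smallest family of subsets of `ℝ^d`
containing all singletons of points of `X` and closed under intersection and
convex hull of unions. -/
inductive PtLattice {d : ℕ} (X : Set (Fin d → ℝ)) : Set (Fin d → ℝ) → Prop
  | single {x : Fin d → ℝ} (hx : x ∈ X) : PtLattice X {x}
  | inter {A B : Set (Fin d → ℝ)} : PtLattice X A → PtLattice X B → PtLattice X (A ∩ B)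
  | join {A B : Set (Fin d → ℝ)} : PtLattice X A → PtLattice X B →
      PtLattice X (convexHull ℝ (A ∪ B))

open Set

variable {d : ℕ}

/-- The "minimal face" of `C` at `x`: points `y ∈ C` such that one can move from `x`
slightly beyond `x` away from `y` while staying in `C`. -/
def Sface (C : Set (Fin d → ℝ)) (x : Fin d → ℝ) : Set (Fin d → ℝ) :=
  {y | y ∈ C ∧ ∃ δ : ℝ, 0 < δ ∧ x + δ • (x - y) ∈ C}

lemma Sface_subset (C : Set (Fin d → ℝ)) (x : Fin d → ℝ) : Sface C x ⊆ C := fun _ h => h.1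

lemma mem_Sface_self {C : Set (Fin d → ℝ)} {x : Fin d → ℝ} (hx : x ∈ C) : x ∈ Sface C x :=
  ⟨hx, 1, one_pos, by simpa using hx⟩

lemma shrink {C : Set (Fin d → ℝ)} (hC : Convex ℝ C) {x y : Fin d → ℝ} (hx : x ∈ C)
    {δ₀ δ : ℝ} (hz : x + δ₀ • (x - y) ∈ C) (hδ : 0 < δ) (hle : δ ≤ δ₀) :
    x + δ • (x - y) ∈ C := by
  have hδ₀ : 0 < δ₀ := lt_of_lt_of_le hδ hle
  have h1 : (0:ℝ) ≤ 1 - δ / δ₀ := by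
    have : δ / δ₀ ≤ 1 := (div_le_one hδ₀).2 hle
    linarith
  have h2 : (0:ℝ) ≤ δ / δ₀ := by positivity
  have h3 : (1 - δ / δ₀) + δ / δ₀ = 1 := by ring
  have hcomb := hC hx hz h1 h2 h3
  convert hcomb using 1
  ext i
  simp only [Pi.add_apply, Pi.smul_apply, Pi.sub_apply, smul_eq_mul]
  field_simp
  ring

lemma Sface_convex {C : Set (Fin d → ℝ)} (hC : Convex ℝ C) {x : Fin d → ℝ} (hx : x ∈ C) :
    Convex ℝ (Sface C x) := by
  rintro y₁ ⟨hy₁, δ₁, hδ₁, hz₁⟩ y₂ ⟨hy₂, δ₂, hδ₂, hz₂⟩ a b ha hb hab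
  have hδ : 0 < min δ₁ δ₂ := lt_min hδ₁ hδ₂
  have hz₁' := shrink hC hx hz₁ hδ (min_le_left _ _)
  have hz₂' := shrink hC hx hz₂ hδ (min_le_right _ _)
  refine ⟨hC hy₁ hy₂ ha hb hab, min δ₁ δ₂, hδ, ?_⟩
  have hcomb := hC hz₁' hz₂' ha hb hab
  convert hcomb using 1
  have hb' : b = 1 - a := by linarith
  subst hb'
  ext i
  simp only [Pi.add_apply, Pi.smul_apply, Pi.sub_apply, smul_eq_mul]
  ring

lemma Sface_mem_of_seg {C : Set (Fin d → ℝ)} (hC : Convex ℝ C) {x p q : Fin d → ℝ}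
    (hp : p ∈ C) (hq : q ∈ C) {u v δ : ℝ} (hu : 0 < u) (hv : 0 < v) (huv : u + v = 1)
    (hδ : 0 < δ) (hz : x + δ • (x - (u • p + v • q)) ∈ C) : p ∈ Sface C x := by
  have hpos : (0:ℝ) < 1 + δ * v := by positivity
  refine ⟨hp, δ * u / (1 + δ * v), by positivity, ?_⟩
  have h1 : (0:ℝ) ≤ (1 + δ * v)⁻¹ := by positivity
  have h2 : (0:ℝ) ≤ δ * v / (1 + δ * v) := by positivity
  have h3 : (1 + δ * v)⁻¹ + δ * v / (1 + δ * v) = 1 := by field_simp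
  have hcomb := hC hz hq h1 h2 h3
  convert hcomb using 1
  have hv' : v = 1 - u := by linarith
  subst hv'
  have hne : (1 + δ * (1 - u)) ≠ 0 := ne_of_gt hpos
  ext i
  simp only [Pi.add_apply, Pi.smul_apply, Pi.sub_apply, smul_eq_mul]
  field_simp
  ring

lemma Sface_isExtreme {C : Set (Fin d → ℝ)} (hC : Convex ℝ C) {x : Fin d → ℝ} (hx : x ∈ C) :
    IsExtreme ℝ C (Sface C x) := by
  refine ⟨Sface_subset _ _, fun p hp q hq y hy hseg => ?_⟩
  obtain ⟨u, v, hu, hv, huv, hy'⟩ := hseg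
  subst hy'
  obtain ⟨hyC, δ, hδ, hz⟩ := hy
  exact Sface_mem_of_seg hC hp hq hu hv huv hδ hz

lemma Sface_subset_face {C F : Set (Fin d → ℝ)} (hF : IsExtreme ℝ C F) {x : Fin d → ℝ}
    (hxF : x ∈ F) : Sface C x ⊆ F := by
  rintro y ⟨hyC, δ, hδ, hz⟩
  have h1 : (0:ℝ) < 1 + δ := by linarith
  have hseg : x ∈ openSegment ℝ y (x + δ • (x - y)) := by
    refine ⟨δ / (1 + δ), 1 / (1 + δ), by positivity, by positivity, by field_simp; ring, ?_⟩
    ext i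
    simp only [Pi.add_apply, Pi.smul_apply, Pi.sub_apply, smul_eq_mul]
    field_simp
    ring
  exact hF.2 hyC hz hxF hseg

lemma Sface_inter {A B : Set (Fin d → ℝ)} (hA : Convex ℝ A) (hB : Convex ℝ B)
    {x : Fin d → ℝ} (hx : x ∈ A ∩ B) :
    Sface (A ∩ B) x = Sface A x ∩ Sface B x := by
  ext y
  constructor
  · rintro ⟨⟨hyA, hyB⟩, δ, hδ, hzA, hzB⟩
    exact ⟨⟨hyA, δ, hδ, hzA⟩, ⟨hyB, δ, hδ, hzB⟩⟩
  · rintro ⟨⟨hyA, δ₁, hδ₁, hz₁⟩, ⟨hyB, δ₂, hδ₂, hz₂⟩⟩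
    have hδ : 0 < min δ₁ δ₂ := lt_min hδ₁ hδ₂
    exact ⟨⟨hyA, hyB⟩, min δ₁ δ₂, hδ,
      shrink hA hx.1 hz₁ hδ (min_le_left _ _), shrink hB hx.2 hz₂ hδ (min_le_right _ _)⟩

lemma isExtreme_inter_of_subset {C F A : Set (Fin d → ℝ)} (hF : IsExtreme ℝ C F)
    (hAC : A ⊆ C) : IsExtreme ℝ A (A ∩ F) := by
  refine ⟨inter_subset_left, fun p hp q hq y hy hseg => ?_⟩
  exact ⟨hp, hF.2 (hAC hp) (hAC hq) hy.2 hseg⟩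

lemma Sface_singleton (x : Fin d → ℝ) : Sface ({x} : Set (Fin d → ℝ)) x = {x} :=
  Subset.antisymm (Sface_subset _ _) (singleton_subset_iff.2 (mem_Sface_self rfl))

/-- Selection of a "relative interior" point: a nonempty convex extreme subset of `A`
is of the form `Sface A a`, provided `A` has finitely many minimal faces. -/
lemma exists_eq_Sface {A F : Set (Fin d → ℝ)} (hA : Convex ℝ A)
    (hfin : {G | ∃ a ∈ A, G = Sface A a}.Finite)
    (hF : IsExtreme ℝ A F) (hFconv : Convex ℝ F) (hFne : F.Nonempty) :
    ∃ a ∈ A, F = Sface A a := by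
  have hDfin : ((fun a => Sface A a) '' F).Finite :=
    hfin.subset (by rintro _ ⟨a, ha, rfl⟩; exact ⟨a, hF.1 ha, rfl⟩)
  have hDne : ((fun a => Sface A a) '' F).Nonempty := hFne.image _
  obtain ⟨G, hGD, hGmax⟩ := Set.Finite.exists_maximalFor id _ hDfin hDne
  obtain ⟨a₀, ha₀F, rfl⟩ := hGD
  refine ⟨a₀, hF.1 ha₀F, Subset.antisymm ?_ (Sface_subset_face hF ha₀F)⟩
  intro a haF
  have key : Sface A a ⊆ Sface A a₀ := by
    by_cases heq : a = a₀
    · subst heq; exact Subset.rfl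
    · set m := (1/2 : ℝ) • a + (1/2 : ℝ) • a₀ with hm
      have hmF : m ∈ F := hFconv haF ha₀F (by norm_num) (by norm_num) (by norm_num)
      have hmA : m ∈ A := hF.1 hmF
      have hmm : m ∈ Sface A m := mem_Sface_self hmA
      have hseg : m ∈ openSegment ℝ a a₀ :=
        ⟨1/2, 1/2, by norm_num, by norm_num, by norm_num, rfl⟩
      have hext := Sface_isExtreme hA hmA
      have haS := hext.2 (hF.1 haF) (hF.1 ha₀F) hmm hseg
      have ha₀S := hext.right_mem_of_mem_openSegment (hF.1 haF) (hF.1 ha₀F) hmm hseg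
      have h1 : Sface A a ⊆ Sface A m := Sface_subset_face hext haS
      have h2 : Sface A a₀ ⊆ Sface A m := Sface_subset_face hext ha₀S
      have h3 : Sface A a₀ = Sface A m := Subset.antisymm h2 (hGmax ⟨m, hmF, rfl⟩ h2)
      rw [h3]; exact h1
  exact key (mem_Sface_self (hF.1 haF))

lemma Sface_join {A B : Set (Fin d → ℝ)} (hA : Convex ℝ A) (hB : Convex ℝ B)
    (hAne : A.Nonempty) (hBne : B.Nonempty) {x : Fin d → ℝ}
    (hx : x ∈ convexHull ℝ (A ∪ B)) :
    Sface (convexHull ℝ (A ∪ B)) x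
      = convexHull ℝ ((A ∩ Sface (convexHull ℝ (A ∪ B)) x)
          ∪ (B ∩ Sface (convexHull ℝ (A ∪ B)) x)) := by
  set C := convexHull ℝ (A ∪ B) with hCdef
  have hCc : Convex ℝ C := convex_convexHull _ _
  have hext := Sface_isExtreme hCc hx
  have hconv := Sface_convex hCc hx
  apply Subset.antisymm
  · intro y hy
    have hyC : y ∈ C := hy.1
    rw [hCdef, hA.convexHull_union hB hAne hBne, mem_convexJoin] at hyC
    obtain ⟨p, hp, q, hq, u, v, hu, hv, huv, hy'⟩ := hyC
    have hpC : p ∈ C := subset_convexHull ℝ _ (mem_union_left _ hp)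
    have hqC : q ∈ C := subset_convexHull ℝ _ (mem_union_right _ hq)
    rcases hu.eq_or_lt with h | hu'
    · have hyq : y = q := by
        rw [← hy', ← h, zero_smul, zero_add, show v = 1 by linarith, one_smul]
      exact subset_convexHull ℝ _ (mem_union_right _ ⟨hyq ▸ hq, hy⟩)
    rcases hv.eq_or_lt with h | hv'
    · have hyp : y = p := by
        rw [← hy', ← h, zero_smul, add_zero, show u = 1 by linarith, one_smul]
      exact subset_convexHull ℝ _ (mem_union_left _ ⟨hyp ▸ hp, hy⟩)
    have hpS := hext.2 hpC hqC hy ⟨u, v, hu', hv', huv, hy'⟩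
    have hqS := hext.right_mem_of_mem_openSegment hpC hqC hy ⟨u, v, hu', hv', huv, hy'⟩
    rw [← hy']
    exact (convex_convexHull ℝ _)
      (subset_convexHull ℝ _ (mem_union_left _ (show p ∈ A ∩ Sface C x from ⟨hp, hpS⟩)))
      (subset_convexHull ℝ _ (mem_union_right _ (show q ∈ B ∩ Sface C x from ⟨hq, hqS⟩))) hu hv huv
  · exact convexHull_min (union_subset inter_subset_right inter_subset_right) hconv

/-- Main induction: every lattice member is convex, has finitely many minimal faces,
and all of its minimal faces are lattice members. -/
theorem ptLattice_strong {X : Set (Fin d → ℝ)} {C : Set (Fin d → ℝ)} (h : PtLattice X C) :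
    Convex ℝ C ∧ {F | ∃ x ∈ C, F = Sface C x}.Finite ∧
      ∀ x ∈ C, PtLattice X (Sface C x) := by
  induction h with
  | @single x₀ hx₀ =>
    refine ⟨convex_singleton _, ?_, ?_⟩
    · apply Set.Finite.subset (Set.finite_singleton ({x₀} : Set (Fin d → ℝ)))
      rintro F ⟨x, hx, rfl⟩
      have hx' : x = x₀ := hx
      subst hx'
      simp [Sface_singleton]
    · intro x hx
      have hx' : x = x₀ := hx
      subst hx'
      rw [Sface_singleton]
      exact PtLattice.single hx₀
  | @inter A B hA hB ihA ihB =>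
    obtain ⟨hAc, hAfin, hAlat⟩ := ihA
    obtain ⟨hBc, hBfin, hBlat⟩ := ihB
    refine ⟨hAc.inter hBc, ?_, ?_⟩
    · apply Set.Finite.subset
        (Set.Finite.image (fun p : Set (Fin d → ℝ) × Set (Fin d → ℝ) => p.1 ∩ p.2)
          (hAfin.prod hBfin))
      rintro F ⟨x, hx, rfl⟩
      exact ⟨(Sface A x, Sface B x), ⟨⟨x, hx.1, rfl⟩, ⟨x, hx.2, rfl⟩⟩,
        (Sface_inter hAc hBc hx).symm⟩
    · intro x hx
      rw [Sface_inter hAc hBc hx]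
      exact PtLattice.inter (hAlat x hx.1) (hBlat x hx.2)
  | @join A B hA hB ihA ihB =>
    obtain ⟨hAc, hAfin, hAlat⟩ := ihA
    obtain ⟨hBc, hBfin, hBlat⟩ := ihB
    by_cases hAne : A.Nonempty
    swap
    · have hA0 : A = ∅ := not_nonempty_iff_eq_empty.1 hAne
      have hCB : convexHull ℝ (A ∪ B) = B := by
        rw [hA0, empty_union, hBc.convexHull_eq]
      rw [hCB]
      exact ⟨hBc, hBfin, hBlat⟩
    by_cases hBne : B.Nonempty
    swap
    · have hB0 : B = ∅ := not_nonempty_iff_eq_empty.1 hBne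
      have hCA : convexHull ℝ (A ∪ B) = A := by
        rw [hB0, union_empty, hAc.convexHull_eq]
      rw [hCA]
      exact ⟨hAc, hAfin, hAlat⟩
    set C := convexHull ℝ (A ∪ B) with hCdef
    have hCc : Convex ℝ C := convex_convexHull _ _
    have hAC : A ⊆ C := fun a ha => subset_convexHull ℝ _ (mem_union_left _ ha)
    have hBC : B ⊆ C := fun b hb => subset_convexHull ℝ _ (mem_union_right _ hb)
    -- key decomposition for each x ∈ C
    have key : ∀ x ∈ C,
        ∃ FA ∈ insert (∅ : Set (Fin d → ℝ)) {G | ∃ a ∈ A, G = Sface A a},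
        ∃ FB ∈ insert (∅ : Set (Fin d → ℝ)) {G | ∃ b ∈ B, G = Sface B b},
          Sface C x = convexHull ℝ (FA ∪ FB) := by
      intro x hx
      have hdecomp := Sface_join hAc hBc hAne hBne hx
      have hSext := Sface_isExtreme hCc hx
      have hSconv := Sface_convex hCc hx
      have hFAfact : (A ∩ Sface C x) ∈
          insert (∅ : Set (Fin d → ℝ)) {G | ∃ a ∈ A, G = Sface A a} := by
        rcases Set.eq_empty_or_nonempty (A ∩ Sface C x) with h0 | hne
        · rw [h0]; exact mem_insert _ _
        · obtain ⟨a, haA, haEq⟩ := exists_eq_Sface hAc hAfin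
            (isExtreme_inter_of_subset hSext hAC) (hAc.inter hSconv) hne
          exact mem_insert_of_mem _ ⟨a, haA, haEq⟩
      have hFBfact : (B ∩ Sface C x) ∈
          insert (∅ : Set (Fin d → ℝ)) {G | ∃ b ∈ B, G = Sface B b} := by
        rcases Set.eq_empty_or_nonempty (B ∩ Sface C x) with h0 | hne
        · rw [h0]; exact mem_insert _ _
        · obtain ⟨b, hbB, hbEq⟩ := exists_eq_Sface hBc hBfin
            (isExtreme_inter_of_subset hSext hBC) (hBc.inter hSconv) hne
          exact mem_insert_of_mem _ ⟨b, hbB, hbEq⟩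
      exact ⟨_, hFAfact, _, hFBfact, hdecomp⟩
    refine ⟨hCc, ?_, ?_⟩
    · apply Set.Finite.subset
        (Set.Finite.image
          (fun p : Set (Fin d → ℝ) × Set (Fin d → ℝ) => convexHull ℝ (p.1 ∪ p.2))
          (((hAfin.insert ∅).prod (hBfin.insert ∅))))
      rintro F ⟨x, hx, rfl⟩
      obtain ⟨FA, hFA, FB, hFB, hEq⟩ := key x hx
      exact ⟨(FA, FB), ⟨hFA, hFB⟩, hEq.symm⟩
    · intro x hx
      obtain ⟨FA, hFA, FB, hFB, hEq⟩ := key x hx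
      have hxS : x ∈ Sface C x := mem_Sface_self hx
      rcases (mem_insert_iff.1 hFA) with h0A | ⟨a, haA, rfl⟩
      · rcases (mem_insert_iff.1 hFB) with h0B | ⟨b, hbB, rfl⟩
        · exfalso
          rw [hEq, h0A, h0B, union_empty, convexHull_empty] at hxS
          exact hxS
        · rw [hEq, h0A, empty_union, (Sface_convex hBc hbB).convexHull_eq]
          exact hBlat b hbB
      · rcases (mem_insert_iff.1 hFB) with h0B | ⟨b, hbB, rfl⟩
        · rw [hEq, h0B, union_empty, (Sface_convex hAc haA).convexHull_eq]
          exact hAlat a haA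
        · rw [hEq]
          exact PtLattice.join (hAlat a haA) (hBlat b hbB)

/-- If `X` is complete, then for every `C ∈ 𝒦(X)` the extreme points of `C` lie in `X`. -/
theorem extremePoints_subset_of_complete (d : ℕ) (X : Set (Fin d → ℝ))
    (hX : ∀ x : Fin d → ℝ, PtLattice X {x} → x ∈ X) :
    ∀ C : Set (Fin d → ℝ), PtLattice X C → Set.extremePoints ℝ C ⊆ X := by
  intro C hC x hx
  obtain ⟨hconv, _, hlat⟩ := ptLattice_strong hC
  have hxC : x ∈ C := hx.1
  have hsing : IsExtreme ℝ C {x} := isExtreme_singleton.2 hx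
  have h1 : Sface C x = {x} :=
    Subset.antisymm (Sface_subset_face hsing rfl)
      (singleton_subset_iff.2 (mem_Sface_self hxC))
  exact hX x (h1 ▸ hlat x hxC)
end

section
/- Let X ⊆ ℝ^d be complete. Then every B ∈ 𝒦(X) satisfies B = convexHull ℝ (B ∩ X); that is, the map A ↦ convexHull ℝ A is a left inverse of the map B ↦ B ∩ X on 𝒦(X). -/
lemma PtLattice.convex {d : ℕ} {X : Set (Fin d → ℝ)} {B : Set (Fin d → ℝ)}
    (h : PtLattice X B) : Convex ℝ B := by
  induction h with
  | single hx => exact convex_singleton _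
  | inter _ _ ihA ihB => exact ihA.inter ihB
  | join _ _ _ _ => exact convex_convexHull ℝ _

lemma ptLattice_hull_finset {d : ℕ} {X : Set (Fin d → ℝ)} (F : Finset (Fin d → ℝ))
    (hF : ↑F ⊆ X) (hne : F.Nonempty) : PtLattice X (convexHull ℝ (F : Set (Fin d → ℝ))) := by
  classical
  induction F using Finset.induction_on with
  | empty => exact absurd hne (by simp)
  | @insert a F ha ih =>
    have haX : a ∈ X := hF (by simp)
    rcases F.eq_empty_or_nonempty with rfl | hFne
    · simpa [convexHull_singleton] using PtLattice.single haX
    · have hFX : (F : Set (Fin d → ℝ)) ⊆ X := fun y hy => hF (by simp [hy])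
      have h2 := PtLattice.join (PtLattice.single haX) (ih hFX hFne)
      have heq : convexHull ℝ ({a} ∪ convexHull ℝ (F : Set (Fin d → ℝ)))
          = convexHull ℝ (↑(insert a F) : Set (Fin d → ℝ)) := by
        rw [convexHull_convexHull_union_right, Finset.coe_insert, Set.insert_eq]
      rwa [heq] at h2

lemma exists_pos_weights {d : ℕ} (F : Finset (Fin d → ℝ)) {v : Fin d → ℝ}
    (hv : v ∈ convexHull ℝ (F : Set (Fin d → ℝ))) :
    ∃ F₀ : Finset (Fin d → ℝ), F₀ ⊆ F ∧ ∃ w : (Fin d → ℝ) → ℝ,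
      (∀ y ∈ F₀, 0 < w y) ∧ ∑ y ∈ F₀, w y = 1 ∧ ∑ y ∈ F₀, w y • y = v := by
  classical
  obtain ⟨w, hw0, hw1, hwv⟩ := Finset.mem_convexHull'.1 hv
  refine ⟨F.filter (fun y => w y ≠ 0), Finset.filter_subset _ _, w, ?_, ?_, ?_⟩
  · intro y hy
    rw [Finset.mem_filter] at hy
    exact lt_of_le_of_ne (hw0 y hy.1) (Ne.symm hy.2)
  · rw [Finset.sum_filter_ne_zero]; exact hw1
  · rw [Finset.sum_filter_of_ne (fun y _ h => by
      intro hw; exact h (by simp [hw]))]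
    exact hwv

lemma push_past {d : ℕ} (F₀ : Finset (Fin d → ℝ)) (w : (Fin d → ℝ) → ℝ)
    (hpos : ∀ y ∈ F₀, 0 < w y) (hsum : ∑ y ∈ F₀, w y = 1) {v : Fin d → ℝ}
    (hv : ∑ y ∈ F₀, w y • y = v) {u : Fin d → ℝ}
    (hu : u ∈ convexHull ℝ (F₀ : Set (Fin d → ℝ))) {t : ℝ} (ht0 : 0 ≤ t)
    (ht : ∀ y ∈ F₀, t ≤ w y) :
    (1 + t) • v - t • u ∈ convexHull ℝ (F₀ : Set (Fin d → ℝ)) := by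
  obtain ⟨u', hu0, hu1, huu⟩ := Finset.mem_convexHull'.1 hu
  apply Finset.mem_convexHull'.2
  refine ⟨fun y => (1 + t) * w y - t * u' y, ?_, ?_, ?_⟩
  · intro y hy
    have h1 : u' y ≤ 1 := hu1 ▸ Finset.single_le_sum (fun i hi => hu0 i hi) hy
    show (0:ℝ) ≤ (1 + t) * w y - t * u' y
    nlinarith [hpos y hy, ht y hy, hu0 y hy, mul_nonneg ht0 (hpos y hy).le,
      mul_nonneg ht0 (sub_nonneg.2 h1)]
  · rw [Finset.sum_sub_distrib, ← Finset.mul_sum, ← Finset.mul_sum, hsum, hu1]; ring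
  · have : ∀ y ∈ F₀, ((1 + t) * w y - t * u' y) • y
        = (1 + t) • (w y • y) - t • (u' y • y) := by
      intro y _; rw [sub_smul, mul_smul, mul_smul]
    rw [Finset.sum_congr rfl this, Finset.sum_sub_distrib, ← Finset.smul_sum,
      ← Finset.smul_sum, hv, huu]

lemma extreme_eq_singleton {d : ℕ} (F G : Finset (Fin d → ℝ)) {v : Fin d → ℝ}
    (hv : v ∈ (convexHull ℝ (F : Set (Fin d → ℝ)) ∩ convexHull ℝ (G : Set (Fin d → ℝ))).extremePoints ℝ) :
    ∃ F₀ G₀ : Finset (Fin d → ℝ), F₀ ⊆ F ∧ G₀ ⊆ G ∧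
      convexHull ℝ (F₀ : Set (Fin d → ℝ)) ∩ convexHull ℝ (G₀ : Set (Fin d → ℝ)) = {v} := by
  obtain ⟨⟨hvF, hvG⟩, hext⟩ := hv
  obtain ⟨F₀, hF₀, w, hwpos, hwsum, hwv⟩ := exists_pos_weights F hvF
  obtain ⟨G₀, hG₀, w', hwpos', hwsum', hwv'⟩ := exists_pos_weights G hvG
  have hF₀ne : F₀.Nonempty := Finset.nonempty_of_sum_ne_zero (by rw [hwsum]; norm_num)
  have hG₀ne : G₀.Nonempty := Finset.nonempty_of_sum_ne_zero (by rw [hwsum']; norm_num)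
  have hvF₀ : v ∈ convexHull ℝ (F₀ : Set (Fin d → ℝ)) :=
    Finset.mem_convexHull'.2 ⟨w, fun y hy => (hwpos y hy).le, hwsum, hwv⟩
  have hvG₀ : v ∈ convexHull ℝ (G₀ : Set (Fin d → ℝ)) :=
    Finset.mem_convexHull'.2 ⟨w', fun y hy => (hwpos' y hy).le, hwsum', hwv'⟩
  refine ⟨F₀, G₀, hF₀, hG₀, Set.Subset.antisymm ?_ (by simp [hvF₀, hvG₀])⟩
  rintro u ⟨huF₀, huG₀⟩
  by_contra hne
  set tF := F₀.inf' hF₀ne w with htF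
  set tG := G₀.inf' hG₀ne w' with htG
  set t := min tF tG with htdef
  have htpos : 0 < t := lt_min ((Finset.lt_inf'_iff _).2 hwpos) ((Finset.lt_inf'_iff _).2 hwpos')
  have htF' : ∀ y ∈ F₀, t ≤ w y := fun y hy =>
    le_trans (min_le_left _ _) (Finset.inf'_le _ hy)
  have htG' : ∀ y ∈ G₀, t ≤ w' y := fun y hy =>
    le_trans (min_le_right _ _) (Finset.inf'_le _ hy)
  set p := (1 + t) • v - t • u with hp
  have hpF : p ∈ convexHull ℝ (F₀ : Set (Fin d → ℝ)) :=
    push_past F₀ w hwpos hwsum hwv huF₀ htpos.le htF'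
  have hpG : p ∈ convexHull ℝ (G₀ : Set (Fin d → ℝ)) :=
    push_past G₀ w' hwpos' hwsum' hwv' huG₀ htpos.le htG'
  have hmonoF : convexHull ℝ (F₀ : Set (Fin d → ℝ)) ⊆ convexHull ℝ (F : Set (Fin d → ℝ)) :=
    convexHull_mono (Finset.coe_subset.2 hF₀)
  have hmonoG : convexHull ℝ (G₀ : Set (Fin d → ℝ)) ⊆ convexHull ℝ (G : Set (Fin d → ℝ)) :=
    convexHull_mono (Finset.coe_subset.2 hG₀)
  have huQ : u ∈ convexHull ℝ (F : Set (Fin d → ℝ)) ∩ convexHull ℝ (G : Set (Fin d → ℝ)) :=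
    ⟨hmonoF huF₀, hmonoG huG₀⟩
  have hpQ : p ∈ convexHull ℝ (F : Set (Fin d → ℝ)) ∩ convexHull ℝ (G : Set (Fin d → ℝ)) :=
    ⟨hmonoF hpF, hmonoG hpG⟩
  have hseg : v ∈ openSegment ℝ u p := by
    have h1t : (0 : ℝ) < 1 + t := by linarith
    refine ⟨t / (1 + t), 1 / (1 + t), div_pos htpos h1t, div_pos one_pos h1t, ?_, ?_⟩
    · field_simp
      ring
    · rw [hp, smul_sub, smul_smul, smul_smul]
      have e1 : (1 : ℝ) / (1 + t) * (1 + t) = 1 := by field_simp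
      have e2 : t / (1 + t) = 1 / (1 + t) * t := by ring
      rw [e1, e2, one_smul]
      abel
  exact hne (hext huQ hpQ hseg)

lemma polytope_key {d : ℕ} {X : Set (Fin d → ℝ)}
    (hX : ∀ x : Fin d → ℝ, PtLattice X {x} → x ∈ X)
    (F G : Finset (Fin d → ℝ)) (hF : ↑F ⊆ X) (hG : ↑G ⊆ X) :
    convexHull ℝ (F : Set (Fin d → ℝ)) ∩ convexHull ℝ (G : Set (Fin d → ℝ)) ⊆
      convexHull ℝ ((convexHull ℝ (F : Set (Fin d → ℝ)) ∩ convexHull ℝ (G : Set (Fin d → ℝ))) ∩ X) := by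
  classical
  set Q := convexHull ℝ (F : Set (Fin d → ℝ)) ∩ convexHull ℝ (G : Set (Fin d → ℝ)) with hQ
  have hext_sub : Q.extremePoints ℝ ⊆ Q ∩ X := by
    intro v hv
    refine ⟨hv.1, ?_⟩
    obtain ⟨F₀, G₀, hF₀, hG₀, heq⟩ := extreme_eq_singleton F G hv
    have hvmem : v ∈ convexHull ℝ (F₀ : Set (Fin d → ℝ)) ∩ convexHull ℝ (G₀ : Set (Fin d → ℝ)) := by
      rw [heq]; rfl
    have hF₀ne : F₀.Nonempty := by
      rcases F₀.eq_empty_or_nonempty with rfl | h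
      · simp at hvmem
      · exact h
    have hG₀ne : G₀.Nonempty := by
      rcases G₀.eq_empty_or_nonempty with rfl | h
      · simp at hvmem
      · exact h
    apply hX
    rw [← heq]
    exact PtLattice.inter
      (ptLattice_hull_finset F₀ ((Finset.coe_subset.2 hF₀).trans hF) hF₀ne)
      (ptLattice_hull_finset G₀ ((Finset.coe_subset.2 hG₀).trans hG) hG₀ne)
  have hfin : (Q.extremePoints ℝ).Finite := by
    have hsub : Q.extremePoints ℝ ⊆
        ⋃ p ∈ (F.powerset ×ˢ G.powerset : Finset _),
          {x : Fin d → ℝ | convexHull ℝ ((p.1 : Finset (Fin d → ℝ)) : Set (Fin d → ℝ)) ∩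
            convexHull ℝ ((p.2 : Finset (Fin d → ℝ)) : Set (Fin d → ℝ)) = {x}} := by
      intro v hv
      obtain ⟨F₀, G₀, hF₀, hG₀, heq⟩ := extreme_eq_singleton F G hv
      have hmem : (F₀, G₀) ∈ (F.powerset ×ˢ G.powerset : Finset _) := by
        simp [Finset.mem_product, Finset.mem_powerset, hF₀, hG₀]
      refine Set.mem_biUnion hmem ?_
      exact heq
    refine Set.Finite.subset (Set.Finite.biUnion (Finset.finite_toSet _) ?_) hsub
    intro p _
    apply Set.Subsingleton.finite
    intro a ha b hb
    have : ({a} : Set (Fin d → ℝ)) = {b} := ha.symm.trans hb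
    simpa using this
  have hQcomp : IsCompact Q :=
    (F.finite_toSet.isCompact_convexHull (𝕜 := ℝ)).inter_right (G.finite_toSet.isClosed_convexHull (𝕜 := ℝ))
  have hQconv : Convex ℝ Q :=
    (convex_convexHull ℝ _).inter (convex_convexHull ℝ _)
  have hKM := closure_convexHull_extremePoints hQcomp hQconv
  have hclosed : IsClosed (convexHull ℝ (Q.extremePoints ℝ)) := hfin.isClosed_convexHull (𝕜 := ℝ)
  have hQeq : Q ⊆ convexHull ℝ (Q.extremePoints ℝ) := by
    conv_lhs => rw [← hKM]
    rw [hclosed.closure_eq]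
  exact hQeq.trans (convexHull_mono hext_sub)

/-- If `X` is complete, then every `B ∈ 𝒦(X)` satisfies `B = convexHull ℝ (B ∩ X)`. -/
theorem convexHull_inter_of_complete (d : ℕ) (X : Set (Fin d → ℝ))
    (hX : ∀ x : Fin d → ℝ, PtLattice X {x} → x ∈ X) :
    ∀ B : Set (Fin d → ℝ), PtLattice X B → B = convexHull ℝ (B ∩ X) := by
  intro B hB
  induction hB with
  | @single x hx =>
    rw [Set.inter_eq_self_of_subset_left (Set.singleton_subset_iff.2 hx), convexHull_singleton]
  | @inter A B hA hB ihA ihB =>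
    apply Set.Subset.antisymm
    · intro p hp
      obtain ⟨hpA, hpB⟩ := hp
      rw [ihA, convexHull_eq_union_convexHull_finite_subsets] at hpA
      rw [ihB, convexHull_eq_union_convexHull_finite_subsets] at hpB
      simp only [Set.mem_iUnion] at hpA hpB
      obtain ⟨F, hFsub, hpF⟩ := hpA
      obtain ⟨G, hGsub, hpG⟩ := hpB
      have key := polytope_key hX F G (hFsub.trans Set.inter_subset_right)
        (hGsub.trans Set.inter_subset_right) ⟨hpF, hpG⟩
      have hQsub : convexHull ℝ (F : Set (Fin d → ℝ)) ∩ convexHull ℝ (G : Set (Fin d → ℝ)) ⊆ A ∩ B := by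
        apply Set.inter_subset_inter
        · intro y hy
          rw [ihA]; exact convexHull_mono hFsub hy
        · intro y hy
          rw [ihB]; exact convexHull_mono hGsub hy
      exact convexHull_mono (Set.inter_subset_inter_left X hQsub) key
    · exact convexHull_min Set.inter_subset_left (hA.convex.inter hB.convex)
  | @join A B hA hB ihA ihB =>
    apply Set.Subset.antisymm
    · have hsub : (A ∩ X) ∪ (B ∩ X) ⊆ (convexHull ℝ (A ∪ B)) ∩ X := by
        rintro y (⟨hyA, hyX⟩ | ⟨hyB, hyX⟩)
        · exact ⟨subset_convexHull ℝ _ (Set.mem_union_left _ hyA), hyX⟩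
        · exact ⟨subset_convexHull ℝ _ (Set.mem_union_right _ hyB), hyX⟩
      have h1 : A ∪ B ⊆ convexHull ℝ ((convexHull ℝ (A ∪ B)) ∩ X) := by
        rintro y (hyA | hyB)
        · rw [ihA] at hyA
          exact convexHull_mono (Set.subset_union_left.trans hsub) hyA
        · rw [ihB] at hyB
          exact convexHull_mono (Set.subset_union_right.trans hsub) hyB
      exact convexHull_min h1 (convex_convexHull ℝ _)
    · exact convexHull_min Set.inter_subset_left (convex_convexHull ℝ _)
end

section
/- Let X ⊆ ℝ^d be complete and let A, B ∈ 𝒦(X). Then (convexHull ℝ (A ∪ B)) ∩ X = (convexHull ℝ ((A ∩ X) ∪ (B ∩ X))) ∩ X. -/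
open Set
variable {E : Type*} [AddCommGroup E] [Module ℝ E]

def MinFace (A : Set E) (x : E) : Set E := {y | y ∈ A ∧ ∃ t : ℝ, 0 < t ∧ x + t • (x - y) ∈ A}


lemma minFace_subset {A : Set E} {x : E} : MinFace A x ⊆ A := fun _ hy => hy.1

lemma mem_minFace_self {A : Set E} {x : E} (hx : x ∈ A) : x ∈ MinFace A x :=
  ⟨hx, 1, one_pos, by simpa⟩

lemma minFace_subset_extreme {A F : Set E} {x : E} (hF : IsExtreme ℝ A F) (hx : x ∈ F) :
    MinFace A x ⊆ F := by
  rintro y ⟨hyA, t, ht, hz⟩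
  have h1t : (0:ℝ) < 1 + t := by linarith
  have hseg : x ∈ openSegment ℝ y (x + t • (x - y)) := by
    refine ⟨t / (1 + t), 1 / (1 + t), by positivity, by positivity, by field_simp; ring, ?_⟩
    match_scalars <;> field_simp <;> ring
  exact hF.2 hyA hz hx hseg

lemma isExtreme_minFace {A : Set E} {x : E} (hA : Convex ℝ A) : IsExtreme ℝ A (MinFace A x) := by
  refine ⟨fun _ hy => hy.1, ?_⟩
  suffices key : ∀ ⦃y₁⦄, y₁ ∈ A → ∀ ⦃y₂⦄, y₂ ∈ A → ∀ ⦃w⦄, w ∈ MinFace A x →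
      w ∈ openSegment ℝ y₁ y₂ → y₁ ∈ MinFace A x by
    intro y₁ h₁ y₂ h₂ w hw hseg
    exact key h₁ h₂ hw hseg
  rintro y₁ h₁ y₂ h₂ w ⟨hwA, s, hs, hz⟩ ⟨a, b, ha, hb, hab, hw⟩
  have hD : (0:ℝ) < 1 + s * b := by nlinarith
  refine ⟨h₁, s * a / (1 + s * b), by positivity, ?_⟩
  have hmem := hA hz h₂ (a := 1 / (1 + s * b)) (b := s * b / (1 + s * b))
    (by positivity) (by positivity) (by rw [← add_div, div_self hD.ne'])
  rw [← hw] at hmem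
  convert hmem using 1
  match_scalars <;> field_simp <;>
    first
    | (left; ring)
    | linear_combination s * hab
    | linear_combination (-s) * hab
    | linear_combination (2 * s) * hab
    | linear_combination (-(2 * s)) * hab
    | ring

lemma convex_minFace {A : Set E} {x : E} (hA : Convex ℝ A) : Convex ℝ (MinFace A x) := by
  rintro y₁ ⟨h₁, t₁, ht₁, hz₁⟩ y₂ ⟨h₂, t₂, ht₂, hz₂⟩ a b ha hb hab
  refine ⟨hA h₁ h₂ ha hb hab, ?_⟩
  rcases eq_or_lt_of_le ha with rfl | ha
  · simp only [zero_add] at hab; subst hab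
    exact ⟨t₂, ht₂, by simpa using hz₂⟩
  rcases eq_or_lt_of_le hb with rfl | hb
  · simp only [add_zero] at hab; subst hab
    exact ⟨t₁, ht₁, by simpa using hz₁⟩
  have hD : (0:ℝ) < a * t₂ + b * t₁ := by positivity
  refine ⟨t₁ * t₂ / (a * t₂ + b * t₁), by positivity, ?_⟩
  have hmem := hA hz₁ hz₂ (a := a * t₂ / (a * t₂ + b * t₁)) (b := b * t₁ / (a * t₂ + b * t₁))
    (by positivity) (by positivity) (by rw [← add_div, div_self hD.ne'])
  convert hmem using 1
  match_scalars <;> field_simp <;>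
    first
    | (left; ring)
    | linear_combination (t₁ * t₂) * hab
    | linear_combination (-(t₁ * t₂)) * hab
    | linear_combination (2 * t₁ * t₂) * hab
    | linear_combination (-(2 * t₁ * t₂)) * hab
    | ring

lemma mem_of_le_ray {A : Set E} {x y : E} {t t₁ : ℝ} (hA : Convex ℝ A) (hx : x ∈ A)
    (h : x + t₁ • (x - y) ∈ A) (ht : 0 ≤ t) (htt : t ≤ t₁) (ht₁ : 0 < t₁) :
    x + t • (x - y) ∈ A := by
  have hmem := hA h hx (a := t / t₁) (b := 1 - t / t₁)
    (by positivity) (by rw [sub_nonneg]; exact div_le_one_of_le₀ htt ht₁.le) (by ring)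
  convert hmem using 1
  match_scalars <;> field_simp [ht₁.ne'] <;> try ring

lemma minFace_inter {A B : Set E} {x : E} (hA : Convex ℝ A) (hB : Convex ℝ B)
    (hx : x ∈ A ∩ B) : MinFace (A ∩ B) x = MinFace A x ∩ MinFace B x := by
  ext y
  constructor
  · rintro ⟨hy, t, ht, hz⟩
    exact ⟨⟨hy.1, t, ht, hz.1⟩, ⟨hy.2, t, ht, hz.2⟩⟩
  · rintro ⟨⟨hyA, t₁, ht₁, hz₁⟩, ⟨hyB, t₂, ht₂, hz₂⟩⟩
    refine ⟨⟨hyA, hyB⟩, min t₁ t₂, lt_min ht₁ ht₂, ?_, ?_⟩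
    · exact mem_of_le_ray hA hx.1 hz₁ (lt_min ht₁ ht₂).le (min_le_left _ _) ht₁
    · exact mem_of_le_ray hB hx.2 hz₂ (lt_min ht₁ ht₂).le (min_le_right _ _) ht₂

lemma extreme_subset_convexHull_inter {S F : Set E}
    (hF : IsExtreme ℝ (convexHull ℝ S) F) : F ⊆ convexHull ℝ (F ∩ S) := by
  set G : Set E := {x | x ∈ convexHull ℝ S ∧ (x ∈ F → x ∈ convexHull ℝ (F ∩ S))} with hG
  have hGconv : Convex ℝ G := by
    rintro y₁ ⟨h₁, hy₁⟩ y₂ ⟨h₂, hy₂⟩ a b ha hb hab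
    refine ⟨(convex_convexHull ℝ S) h₁ h₂ ha hb hab, fun hwF => ?_⟩
    rcases eq_or_lt_of_le ha with rfl | ha
    · simp only [zero_add] at hab; subst hab; simpa using hy₂ (by simpa using hwF)
    rcases eq_or_lt_of_le hb with rfl | hb
    · simp only [add_zero] at hab; subst hab; simpa using hy₁ (by simpa using hwF)
    have hseg : a • y₁ + b • y₂ ∈ openSegment ℝ y₁ y₂ := ⟨a, b, ha, hb, hab, rfl⟩
    obtain ⟨hf₁, hf₂⟩ := And.intro (hF.2 h₁ h₂ hwF hseg) (hF.right_mem_of_mem_openSegment h₁ h₂ hwF hseg)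
    exact (convex_convexHull ℝ (F ∩ S)) (hy₁ hf₁) (hy₂ hf₂) ha.le hb.le hab
  have hSG : S ⊆ G := fun s hs =>
    ⟨subset_convexHull ℝ S hs, fun hsF => subset_convexHull ℝ _ ⟨hsF, hs⟩⟩
  intro x hx
  exact (convexHull_min hSG hGconv (hF.1 hx)).2 hx

section Normed
variable {F : Type*} [NormedAddCommGroup F] [NormedSpace ℝ F]

lemma minFace_eq_convexHull {A SA : Set F} (hA : A = convexHull ℝ SA) {x : F} (hx : x ∈ A)
    (hconvA : Convex ℝ A) : MinFace A x = convexHull ℝ (MinFace A x ∩ SA) := by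
  refine Subset.antisymm ?_ (convexHull_min inter_subset_left (convex_minFace hconvA))
  exact extreme_subset_convexHull_inter (hA ▸ isExtreme_minFace hconvA)

lemma descent_lemma {A B SA SB : Set F} (hSAf : SA.Finite) (hSBf : SB.Finite)
    (hA : A = convexHull ℝ SA) (hB : B = convexHull ℝ SB) :
    A ∩ B ⊆ convexHull ℝ {x | x ∈ A ∩ B ∧ MinFace A x ∩ MinFace B x = {x}} := by
  have hconvA : Convex ℝ A := hA ▸ convex_convexHull ℝ SA
  have hconvB : Convex ℝ B := hB ▸ convex_convexHull ℝ SB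
  have hcompA : IsCompact A := hA ▸ hSAf.isCompact_convexHull ℝ
  have hcompB : IsCompact B := hB ▸ hSBf.isCompact_convexHull ℝ
  have hclosed : IsClosed (A ∩ B) := hcompA.isClosed.inter hcompB.isClosed
  obtain ⟨R, hR⟩ := hcompA.isBounded.exists_norm_le
  set V : Set F := {x | x ∈ A ∩ B ∧ MinFace A x ∩ MinFace B x = {x}} with hV
  set m : F → ℕ := fun y => (MinFace A y ∩ SA).ncard + (MinFace B y ∩ SB).ncard with hm
  suffices H : ∀ n, ∀ x, x ∈ A ∩ B → m x ≤ n → x ∈ convexHull ℝ V by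
    exact fun x hx => H (m x) x hx le_rfl
  intro n
  induction n using Nat.strong_induction_on with
  | _ n ih =>
    intro x hx hmx
    by_cases hsing : MinFace A x ∩ MinFace B x = {x}
    · exact subset_convexHull ℝ V ⟨hx, hsing⟩
    have hxx : x ∈ MinFace A x ∩ MinFace B x :=
      ⟨mem_minFace_self hx.1, mem_minFace_self hx.2⟩
    have hnsub : ¬ (MinFace A x ∩ MinFace B x ⊆ {x}) := fun hsub =>
      hsing (hsub.antisymm (singleton_subset_iff.2 hxx))
    obtain ⟨y, hyF, hyx⟩ := not_subset.1 hnsub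
    have hyx' : y ≠ x := fun h => hyx (by simp [h])
    have hyAB : y ∈ A ∩ B := ⟨minFace_subset hyF.1, minFace_subset hyF.2⟩
    obtain ⟨-, t₀, ht₀, hzt₀⟩ : y ∈ MinFace (A ∩ B) x := by
      rw [minFace_inter hconvA hconvB hx]; exact hyF
    set u : F := x - y with hu
    have hune : u ≠ 0 := sub_ne_zero.2 hyx'.symm
    have hmem_pos : x + t₀ • u ∈ A ∩ B := hzt₀
    have hmem_neg : x - (1:ℝ) • u ∈ A ∩ B := by simpa [hu] using hyAB
    -- the key one-directional descent step
    have key : ∀ w : F, w ≠ 0 → ∀ t₁ t₂ : ℝ, 0 < t₁ → 0 < t₂ → x + t₁ • w ∈ A ∩ B →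
        x - t₂ • w ∈ A ∩ B → ∃ c : ℝ, 0 < c ∧ x + c • w ∈ A ∩ B ∧ m (x + c • w) < m x := by
      intro w hw t₁ t₂ ht₁ ht₂ h₁ h₂
      set T : Set ℝ := {t | 0 ≤ t ∧ x + t • w ∈ A ∩ B} with hT
      have hTne : T.Nonempty := ⟨t₁, ht₁.le, h₁⟩
      have hTbdd : BddAbove T := by
        refine ⟨(R + ‖x‖) / ‖w‖, fun t ⟨ht0, htm⟩ => ?_⟩
        have h1 : ‖x + t • w‖ ≤ R := hR _ htm.1
        have h2 : t * ‖w‖ = ‖(x + t • w) - x‖ := by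
          rw [add_sub_cancel_left, norm_smul, Real.norm_eq_abs, abs_of_nonneg ht0]
        have h3 : t * ‖w‖ ≤ R + ‖x‖ := by
          rw [h2]; exact (norm_sub_le _ _).trans (by linarith)
        rw [le_div_iff₀ (norm_pos_iff.2 hw)]; exact h3
      have hTclosed : IsClosed T := by
        have : T = Ici (0:ℝ) ∩ (fun t : ℝ => x + t • w) ⁻¹' (A ∩ B) := by
          ext t; simp [hT, Set.mem_preimage]
        rw [this]
        exact isClosed_Ici.inter (hclosed.preimage (by fun_prop))
      set tp : ℝ := sSup T with htpdef
      have htpT : tp ∈ T := hTclosed.csSup_mem hTne hTbdd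
      have htp_pos : 0 < tp := lt_of_lt_of_le ht₁ (le_csSup hTbdd ⟨ht₁.le, h₁⟩)
      set z : F := x + tp • w with hz
      have hzAB : z ∈ A ∩ B := htpT.2
      have hxz : x - z = -(tp • w) := by rw [hz]; abel
      have hzMF : ∀ {C : Set F}, Convex ℝ C → x ∈ C → x - t₂ • w ∈ C → z ∈ C → z ∈ MinFace C x := by
        intro C hC hxC hnC hzC
        refine ⟨hzC, t₂ / tp, by positivity, ?_⟩
        have : x + (t₂ / tp) • (x - z) = x - t₂ • w := by
          rw [hxz]; match_scalars <;> field_simp [htp_pos.ne'] <;> ring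
        rw [this]; exact hnC
      have hsubA : MinFace A z ⊆ MinFace A x :=
        minFace_subset_extreme (isExtreme_minFace hconvA)
          (hzMF hconvA hx.1 h₂.1 hzAB.1)
      have hsubB : MinFace B z ⊆ MinFace B x :=
        minFace_subset_extreme (isExtreme_minFace hconvB)
          (hzMF hconvB hx.2 h₂.2 hzAB.2)
      have hnotboth : ¬ (x ∈ MinFace A z ∧ x ∈ MinFace B z) := by
        rintro ⟨⟨-, sA, hsA, hA'⟩, ⟨-, sB, hsB, hB'⟩⟩
        have hzx : ∀ s : ℝ, z + s • (z - x) = x + (tp + s * tp) • w := by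
          intro s; rw [hz]; match_scalars <;> ring
        rw [hzx sA] at hA'; rw [hzx sB] at hB'
        set s : ℝ := min sA sB with hs
        have hs0 : 0 < s := lt_min hsA hsB
        have hsle : s ≤ sA ∧ s ≤ sB := ⟨min_le_left _ _, min_le_right _ _⟩
        have hmemA : x + (tp + s * tp) • w ∈ A := by
          have h' : x + (tp + sA * tp) • (x - (x - w)) ∈ A := by
            rw [sub_sub_cancel]; exact hA'
          have := mem_of_le_ray (t := tp + s * tp) hconvA hx.1 h'
            (by positivity) (by nlinarith [hsle.1, htp_pos.le]) (by positivity)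
          simpa using this
        have hmemB : x + (tp + s * tp) • w ∈ B := by
          have h' : x + (tp + sB * tp) • (x - (x - w)) ∈ B := by
            rw [sub_sub_cancel]; exact hB'
          have := mem_of_le_ray (t := tp + s * tp) hconvB hx.2 h'
            (by positivity) (by nlinarith [hsle.2, htp_pos.le]) (by positivity)
          simpa using this
        have : tp + s * tp ≤ tp := le_csSup hTbdd ⟨by positivity, hmemA, hmemB⟩
        nlinarith
      have hstrict : ∀ {C SC : Set F}, SC.Finite → C = convexHull ℝ SC → Convex ℝ C →
          x ∈ C → MinFace C z ⊆ MinFace C x → x ∉ MinFace C z →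
          (MinFace C z ∩ SC).ncard < (MinFace C x ∩ SC).ncard := by
        intro C SC hSCf hC hCc hxC hsub hxnot
        refine Set.ncard_lt_ncard ?_ (hSCf.subset inter_subset_right)
        refine (ssubset_iff_subset_ne).2 ⟨inter_subset_inter_left _ hsub, fun heq => hxnot ?_⟩
        have h1 : MinFace C x ⊆ convexHull ℝ (MinFace C x ∩ SC) :=
          (minFace_eq_convexHull hC hxC hCc).le
        rw [← heq] at h1
        exact (h1.trans (convexHull_min inter_subset_left (convex_minFace hCc)))
          (mem_minFace_self hxC)
      have hleA : (MinFace A z ∩ SA).ncard ≤ (MinFace A x ∩ SA).ncard :=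
        Set.ncard_le_ncard (inter_subset_inter_left _ hsubA) (hSAf.subset inter_subset_right)
      have hleB : (MinFace B z ∩ SB).ncard ≤ (MinFace B x ∩ SB).ncard :=
        Set.ncard_le_ncard (inter_subset_inter_left _ hsubB) (hSBf.subset inter_subset_right)
      refine ⟨tp, htp_pos, hzAB, ?_⟩
      show m z < m x
      by_cases hxA : x ∈ MinFace A z
      · have hxB : x ∉ MinFace B z := fun h => hnotboth ⟨hxA, h⟩
        have := hstrict hSBf hB hconvB hx.2 hsubB hxB
        simp only [hm]; omega
      · have := hstrict hSAf hA hconvA hx.1 hsubA hxA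
        simp only [hm]; omega
    obtain ⟨c₁, hc₁, hz₁AB, hm₁⟩ := key u hune t₀ 1 ht₀ one_pos hmem_pos hmem_neg
    obtain ⟨c₂, hc₂, hz₂AB, hm₂⟩ := key (-u) (neg_ne_zero.2 hune) 1 t₀ one_pos ht₀
      (by simpa [hu] using hyAB) (by simpa using hmem_pos)
    have hz₁V : x + c₁ • u ∈ convexHull ℝ V := ih (m (x + c₁ • u)) (lt_of_lt_of_le hm₁ hmx)
      _ hz₁AB le_rfl
    have hz₂V : x + c₂ • (-u) ∈ convexHull ℝ V := ih (m (x + c₂ • (-u))) (lt_of_lt_of_le hm₂ hmx)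
      _ hz₂AB le_rfl
    have hD : (0:ℝ) < c₁ + c₂ := by positivity
    have hcombo := (convex_convexHull ℝ V) hz₁V hz₂V
      (a := c₂ / (c₁ + c₂)) (b := c₁ / (c₁ + c₂)) (by positivity) (by positivity)
      (by rw [add_comm (c₂ / (c₁ + c₂)), ← add_div, div_self hD.ne'])
    have : (c₂ / (c₁ + c₂)) • (x + c₁ • u) + (c₁ / (c₁ + c₂)) • (x + c₂ • (-u)) = x := by
      match_scalars <;> field_simp <;> ring
    rwa [this] at hcombo


lemma vertices_finite {A B SA SB : Set F} (hSAf : SA.Finite) (hSBf : SB.Finite)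
    (hA : A = convexHull ℝ SA) (hB : B = convexHull ℝ SB) :
    {x | x ∈ A ∩ B ∧ MinFace A x ∩ MinFace B x = {x}}.Finite := by
  have hconvA : Convex ℝ A := hA ▸ convex_convexHull ℝ SA
  have hconvB : Convex ℝ B := hB ▸ convex_convexHull ℝ SB
  apply Set.Finite.subset
    (s := ⋃ P ∈ {t : Set F | t ⊆ SA}, ⋃ Q ∈ {t : Set F | t ⊆ SB},
      {x : F | ({x} : Set F) = convexHull ℝ P ∩ convexHull ℝ Q})
  · refine Set.Finite.biUnion hSAf.finite_subsets fun P _ =>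
      Set.Finite.biUnion hSBf.finite_subsets fun Q _ => Set.Subsingleton.finite ?_
    intro a ha b hb
    have : a ∈ ({b} : Set F) := by rw [hb, ← ha]; exact rfl
    exact this
  · rintro x ⟨hxAB, hsing⟩
    refine mem_iUnion₂.2 ⟨MinFace A x ∩ SA, inter_subset_right,
      mem_iUnion₂.2 ⟨MinFace B x ∩ SB, inter_subset_right, ?_⟩⟩
    rw [← minFace_eq_convexHull hA hxAB.1 hconvA, ← minFace_eq_convexHull hB hxAB.2 hconvB]
    exact hsing.symm
end Normed


theorem master {d : ℕ} (X : Set (Fin d → ℝ)) (hX : ∀ x : Fin d → ℝ, PtLattice X {x} → x ∈ X)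
    {C : Set (Fin d → ℝ)} (hC : PtLattice X C) :
    Convex ℝ C ∧ (∃ S : Set (Fin d → ℝ), S.Finite ∧ C = convexHull ℝ S) ∧
      (∀ E, IsExtreme ℝ C E → Convex ℝ E → E.Nonempty → PtLattice X E) ∧
      C ⊆ convexHull ℝ (C ∩ X) := by
  induction hC with
  | @single x hx =>
    refine ⟨convex_singleton x, ⟨{x}, finite_singleton x, (convexHull_singleton x).symm⟩, ?_, ?_⟩
    · intro E hE hEc ⟨e, he⟩
      have hex : e = x := hE.1 he
      have hEeq : E = {x} := hE.1.antisymm (singleton_subset_iff.2 (hex ▸ he))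
      rw [hEeq]; exact PtLattice.single hx
    · intro y hy
      rw [mem_singleton_iff] at hy; subst hy
      exact subset_convexHull ℝ _ ⟨rfl, hx⟩
  | @inter A B hA hB ihA ihB =>
    obtain ⟨hconvA, ⟨SA, hSAf, hSAeq⟩, QA, _⟩ := ihA
    obtain ⟨hconvB, ⟨SB, hSBf, hSBeq⟩, QB, _⟩ := ihB
    have hconv : Convex ℝ (A ∩ B) := hconvA.inter hconvB
    have hQ : ∀ E, IsExtreme ℝ (A ∩ B) E → Convex ℝ E → E.Nonempty → PtLattice X E := by
      rintro E hE hEc ⟨e, he⟩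
      set m : (Fin d → ℝ) → ℕ :=
        fun y => (MinFace A y ∩ SA).ncard + (MinFace B y ∩ SB).ncard with hm
      have hbound : ∀ y, m y ≤ SA.ncard + SB.ncard := fun y =>
        add_le_add (Set.ncard_le_ncard inter_subset_right hSAf)
          (Set.ncard_le_ncard inter_subset_right hSBf)
      have h1 : (m '' E).Nonempty := ⟨m e, e, he, rfl⟩
      have h2 : BddAbove (m '' E) := ⟨SA.ncard + SB.ncard, by
        rintro _ ⟨y, -, rfl⟩; exact hbound y⟩
      obtain ⟨x, hxE, hxm⟩ := Nat.sSup_mem h1 h2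
      have hmax : ∀ y ∈ E, m y ≤ m x := fun y hy => hxm ▸ le_csSup h2 ⟨y, hy, rfl⟩
      have hxAB : x ∈ A ∩ B := hE.1 hxE
      have hEeq : E = MinFace A x ∩ MinFace B x := by
        apply Subset.antisymm
        · intro y hyE
          have hyAB : y ∈ A ∩ B := hE.1 hyE
          set w : Fin d → ℝ := (1/2 : ℝ) • x + (1/2 : ℝ) • y with hw
          have hwE : w ∈ E := hEc hxE hyE (by norm_num) (by norm_num) (by norm_num)
          have hwAB : w ∈ A ∩ B := hE.1 hwE
          have hwx : w + (1:ℝ) • (w - x) = y := by rw [hw]; match_scalars <;> ring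
          have hwy : w + (1:ℝ) • (w - y) = x := by rw [hw]; match_scalars <;> ring
          have hxMFA : x ∈ MinFace A w := ⟨hxAB.1, 1, one_pos, by rw [hwx]; exact hyAB.1⟩
          have hxMFB : x ∈ MinFace B w := ⟨hxAB.2, 1, one_pos, by rw [hwx]; exact hyAB.2⟩
          have hyMFA : y ∈ MinFace A w := ⟨hyAB.1, 1, one_pos, by rw [hwy]; exact hxAB.1⟩
          have hyMFB : y ∈ MinFace B w := ⟨hyAB.2, 1, one_pos, by rw [hwy]; exact hxAB.2⟩
          have hsubA : MinFace A x ⊆ MinFace A w :=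
            minFace_subset_extreme (isExtreme_minFace hconvA) hxMFA
          have hsubB : MinFace B x ⊆ MinFace B w :=
            minFace_subset_extreme (isExtreme_minFace hconvB) hxMFB
          have hcle : m w ≤ m x := hmax w hwE
          have hcA : (MinFace A x ∩ SA).ncard ≤ (MinFace A w ∩ SA).ncard :=
            Set.ncard_le_ncard (inter_subset_inter_left _ hsubA)
              (hSAf.subset inter_subset_right)
          have hcB : (MinFace B x ∩ SB).ncard ≤ (MinFace B w ∩ SB).ncard :=
            Set.ncard_le_ncard (inter_subset_inter_left _ hsubB)
              (hSBf.subset inter_subset_right)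
          have heqA : MinFace A x ∩ SA = MinFace A w ∩ SA :=
            Set.eq_of_subset_of_ncard_le (inter_subset_inter_left _ hsubA)
              (by simp only [hm] at hcle; omega) (hSAf.subset inter_subset_right)
          have heqB : MinFace B x ∩ SB = MinFace B w ∩ SB :=
            Set.eq_of_subset_of_ncard_le (inter_subset_inter_left _ hsubB)
              (by simp only [hm] at hcle; omega) (hSBf.subset inter_subset_right)
          constructor
          · have h3 : y ∈ convexHull ℝ (MinFace A w ∩ SA) :=
              (minFace_eq_convexHull hSAeq hwAB.1 hconvA).le hyMFA
            rw [← heqA] at h3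
            exact convexHull_min inter_subset_left (convex_minFace hconvA) h3
          · have h3 : y ∈ convexHull ℝ (MinFace B w ∩ SB) :=
              (minFace_eq_convexHull hSBeq hwAB.2 hconvB).le hyMFB
            rw [← heqB] at h3
            exact convexHull_min inter_subset_left (convex_minFace hconvB) h3
        · have h4 : MinFace (A ∩ B) x ⊆ E := minFace_subset_extreme hE hxE
          rwa [minFace_inter hconvA hconvB hxAB] at h4
      rw [hEeq]
      exact PtLattice.inter
        (QA _ (isExtreme_minFace hconvA) (convex_minFace hconvA)
          ⟨x, mem_minFace_self hxAB.1⟩)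
        (QB _ (isExtreme_minFace hconvB) (convex_minFace hconvB)
          ⟨x, mem_minFace_self hxAB.2⟩)
    set V : Set (Fin d → ℝ) := {x | x ∈ A ∩ B ∧ MinFace A x ∩ MinFace B x = {x}} with hV
    have hVfin : V.Finite := vertices_finite hSAf hSBf hSAeq hSBeq
    have hVsub : A ∩ B ⊆ convexHull ℝ V := descent_lemma hSAf hSBf hSAeq hSBeq
    have hVX : V ⊆ A ∩ B ∩ X := by
      rintro x ⟨hxAB, hsing⟩
      have hlat : PtLattice X {x} := by
        rw [← hsing]
        exact PtLattice.inter
          (QA _ (isExtreme_minFace hconvA) (convex_minFace hconvA)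
            ⟨x, mem_minFace_self hxAB.1⟩)
          (QB _ (isExtreme_minFace hconvB) (convex_minFace hconvB)
            ⟨x, mem_minFace_self hxAB.2⟩)
      exact ⟨hxAB, hX x hlat⟩
    refine ⟨hconv, ⟨V, hVfin, hVsub.antisymm (convexHull_min (fun v hv => hv.1) hconv)⟩,
      hQ, hVsub.trans (convexHull_mono fun v hv => hVX hv)⟩
  | @join A B hA hB ihA ihB =>
    obtain ⟨hconvA, ⟨SA, hSAf, hSAeq⟩, QA, LA⟩ := ihA
    obtain ⟨hconvB, ⟨SB, hSBf, hSBeq⟩, QB, LB⟩ := ihB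
    have hP : convexHull ℝ (A ∪ B) = convexHull ℝ (SA ∪ SB) := by
      rw [hSAeq, hSBeq, convexHull_convexHull_union_left, convexHull_convexHull_union_right]
    have hQ : ∀ E, IsExtreme ℝ (convexHull ℝ (A ∪ B)) E → Convex ℝ E → E.Nonempty →
        PtLattice X E := by
      intro E hE hEc hEne
      by_cases hAne : A.Nonempty
      swap
      · have hAe : A = ∅ := not_nonempty_iff_eq_empty.1 hAne
        have hCB : convexHull ℝ (A ∪ B) = B := by
          rw [hAe, empty_union, hconvB.convexHull_eq]
        exact QB E (hCB ▸ hE) hEc hEne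
      by_cases hBne : B.Nonempty
      swap
      · have hBe : B = ∅ := not_nonempty_iff_eq_empty.1 hBne
        have hCA : convexHull ℝ (A ∪ B) = A := by
          rw [hBe, union_empty, hconvA.convexHull_eq]
        exact QA E (hCA ▸ hE) hEc hEne
      have hdecomp : E ⊆ convexHull ℝ ((E ∩ A) ∪ (E ∩ B)) := by
        intro z hz
        have hzC : z ∈ convexJoin ℝ A B := by
          rw [← Convex.convexHull_union hconvA hconvB hAne hBne]; exact hE.1 hz
        obtain ⟨a, ha, b, hb, hseg⟩ := mem_convexJoin.1 hzC
        have haC : a ∈ convexHull ℝ (A ∪ B) := subset_convexHull ℝ _ (Or.inl ha)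
        have hbC : b ∈ convexHull ℝ (A ∪ B) := subset_convexHull ℝ _ (Or.inr hb)
        rw [← insert_endpoints_openSegment, mem_insert_iff, mem_insert_iff] at hseg
        rcases hseg with rfl | rfl | hopen
        · exact subset_convexHull ℝ _ (Or.inl ⟨hz, ha⟩)
        · exact subset_convexHull ℝ _ (Or.inr ⟨hz, hb⟩)
        · obtain ⟨haE, hbE⟩ := And.intro (hE.2 haC hbC hz hopen) (hE.right_mem_of_mem_openSegment haC hbC hz hopen)
          have hsub : segment ℝ a b ⊆ convexHull ℝ ((E ∩ A) ∪ (E ∩ B)) :=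
            (convex_convexHull ℝ _).segment_subset
              (subset_convexHull ℝ _ (Or.inl ⟨haE, ha⟩))
              (subset_convexHull ℝ _ (Or.inr ⟨hbE, hb⟩))
          exact hsub (openSegment_subset_segment ℝ a b hopen)
      have hEA_ext : IsExtreme ℝ A (E ∩ A) := by
        refine ⟨inter_subset_right, ?_⟩
        intro x₁ h₁ x₂ h₂ w hw hseg
        have he₁ := hE.2 (subset_convexHull ℝ _ (Or.inl h₁))
          (subset_convexHull ℝ _ (Or.inl h₂)) hw.1 hseg
        exact ⟨he₁, h₁⟩
      have hEB_ext : IsExtreme ℝ B (E ∩ B) := by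
        refine ⟨inter_subset_right, ?_⟩
        intro x₁ h₁ x₂ h₂ w hw hseg
        have he₁ := hE.2 (subset_convexHull ℝ _ (Or.inr h₁))
          (subset_convexHull ℝ _ (Or.inr h₂)) hw.1 hseg
        exact ⟨he₁, h₁⟩
      by_cases hEAne : (E ∩ A).Nonempty
      · by_cases hEBne : (E ∩ B).Nonempty
        · have h1 := QA _ hEA_ext (hEc.inter hconvA) hEAne
          have h2 := QB _ hEB_ext (hEc.inter hconvB) hEBne
          have hEeq : E = convexHull ℝ ((E ∩ A) ∪ (E ∩ B)) :=
            hdecomp.antisymm (convexHull_min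
              (union_subset inter_subset_left inter_subset_left) hEc)
          rw [hEeq]; exact PtLattice.join h1 h2
        · have hBe : E ∩ B = ∅ := not_nonempty_iff_eq_empty.1 hEBne
          have hEeq : E = E ∩ A := by
            refine Subset.antisymm ?_ inter_subset_left
            have := hdecomp
            rw [hBe, union_empty, (hEc.inter hconvA).convexHull_eq] at this
            exact this
          rw [hEeq]; exact QA _ hEA_ext (hEc.inter hconvA) (hEeq ▸ hEne)
      · have hAe : E ∩ A = ∅ := not_nonempty_iff_eq_empty.1 hEAne
        have hEeq : E = E ∩ B := by
          refine Subset.antisymm ?_ inter_subset_left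
          have := hdecomp
          rw [hAe, empty_union, (hEc.inter hconvB).convexHull_eq] at this
          exact this
        rw [hEeq]; exact QB _ hEB_ext (hEc.inter hconvB) (hEeq ▸ hEne)
    refine ⟨convex_convexHull ℝ _, ⟨SA ∪ SB, hSAf.union hSBf, hP⟩, hQ, ?_⟩
    calc convexHull ℝ (A ∪ B)
        ⊆ convexHull ℝ (convexHull ℝ (A ∩ X) ∪ convexHull ℝ (B ∩ X)) :=
          convexHull_mono (union_subset_union LA LB)
      _ = convexHull ℝ ((A ∩ X) ∪ (B ∩ X)) := by
          rw [convexHull_convexHull_union_left, convexHull_convexHull_union_right]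
      _ ⊆ convexHull ℝ (convexHull ℝ (A ∪ B) ∩ X) := by
          refine convexHull_mono ?_
          rintro y (⟨h1, h2⟩ | ⟨h1, h2⟩)
          · exact ⟨subset_convexHull ℝ _ (Or.inl h1), h2⟩
          · exact ⟨subset_convexHull ℝ _ (Or.inr h1), h2⟩

/-- For complete `X` and `A, B ∈ 𝒦(X)`,
`(convexHull ℝ (A ∪ B)) ∩ X = (convexHull ℝ ((A ∩ X) ∪ (B ∩ X))) ∩ X`. -/
theorem join_inter_eq_of_complete (d : ℕ) (X : Set (Fin d → ℝ))
    (hX : ∀ x : Fin d → ℝ, PtLattice X {x} → x ∈ X)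
    (A B : Set (Fin d → ℝ)) (hA : PtLattice X A) (hB : PtLattice X B) :
    convexHull ℝ (A ∪ B) ∩ X = convexHull ℝ ((A ∩ X) ∪ (B ∩ X)) ∩ X := by
  obtain ⟨-, -, -, LA⟩ := master X hX hA
  obtain ⟨-, -, -, LB⟩ := master X hX hB
  apply Set.Subset.antisymm
  · rintro x ⟨h1, h2⟩
    refine ⟨?_, h2⟩
    have hsub : convexHull ℝ (A ∪ B) ⊆ convexHull ℝ ((A ∩ X) ∪ (B ∩ X)) := by
      calc convexHull ℝ (A ∪ B)
          ⊆ convexHull ℝ (convexHull ℝ (A ∩ X) ∪ convexHull ℝ (B ∩ X)) :=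
            convexHull_mono (Set.union_subset_union LA LB)
        _ = convexHull ℝ ((A ∩ X) ∪ (B ∩ X)) := by
            rw [convexHull_convexHull_union_left, convexHull_convexHull_union_right]
    exact hsub h1
  · rintro x ⟨h1, h2⟩
    exact ⟨convexHull_mono
      (Set.union_subset_union Set.inter_subset_left Set.inter_subset_left) h1, h2⟩
end

section
/- Let X ⊆ ℝ^d. Then every element of 𝒦(X) is a bounded polytope: for every C ∈ 𝒦(X) there exists a finite set F ⊆ ℝ^d with C = convexHull ℝ F. -/
section Slice

variable {E : Type*} [AddCommGroup E] [Module ℝ E]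

private lemma centerMass_map (l : E →ₗ[ℝ] ℝ) (F : Finset E) (w : E → ℝ) :
    l (F.centerMass w id) = (∑ y ∈ F, w y)⁻¹ * ∑ y ∈ F, w y * l y := by
  rw [Finset.centerMass, map_smul, map_sum]
  simp [smul_eq_mul]

/-- Generators of the slice of `conv F` by the half-space `l ≤ c`. -/
private def cutSet (l : E →ₗ[ℝ] ℝ) (c : ℝ) (F : Finset E) : Set E :=
  {y ∈ (F : Set E) | l y ≤ c} ∪
    (fun pq : E × E => pq.1 + ((c - l pq.1) / (l pq.2 - l pq.1)) • (pq.2 - pq.1)) ''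
      {pq ∈ (F : Set E) ×ˢ (F : Set E) | l pq.1 ≤ c ∧ c < l pq.2}

private lemma cutSet_finite (l : E →ₗ[ℝ] ℝ) (c : ℝ) (F : Finset E) :
    (cutSet l c F).Finite := by
  apply Set.Finite.union
  · exact F.finite_toSet.subset (Set.sep_subset _ _)
  · exact ((F.finite_toSet.prod F.finite_toSet).subset (Set.sep_subset _ _)).image _

private lemma cutSet_subset (l : E →ₗ[ℝ] ℝ) (c : ℝ) (F : Finset E) :
    cutSet l c F ⊆ convexHull ℝ (F : Set E) ∩ {x | l x ≤ c} := by
  rintro x (⟨hxF, hxc⟩ | ⟨⟨p, q⟩, ⟨⟨hpF, hqF⟩, hpl, hql⟩, rfl⟩)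
  · exact ⟨subset_convexHull ℝ _ hxF, hxc⟩
  · dsimp only at hpF hqF hpl hql ⊢
    set s : ℝ := (c - l p) / (l q - l p) with hs_def
    have hden : 0 < l q - l p := by linarith
    have hs0 : 0 ≤ s := div_nonneg (by linarith) hden.le
    have hs1 : s ≤ 1 := by
      rw [div_le_one hden]; linarith
    have heq : p + s • (q - p) = (1 - s) • p + s • q := by module
    constructor
    · rw [heq]
      exact (convex_convexHull ℝ (F : Set E)) (subset_convexHull ℝ _ hpF)
        (subset_convexHull ℝ _ hqF) (by linarith) hs0 (by ring)
    · show l _ ≤ c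
      have : l (p + s • (q - p)) = l p + s * (l q - l p) := by
        simp [map_add, map_smul, map_sub, smul_eq_mul]
      rw [this, hs_def, div_mul_cancel₀ _ hden.ne']
      linarith

open scoped Classical in
private lemma key (l : E →ₗ[ℝ] ℝ) (c : ℝ) (F : Finset E) :
    ∀ (n : ℕ) (w : E → ℝ), (F.filter fun y => w y ≠ 0).card ≤ n →
      (∀ y ∈ F, 0 ≤ w y) → 0 < ∑ y ∈ F, w y → l (F.centerMass w id) ≤ c →
      F.centerMass w id ∈ convexHull ℝ (cutSet l c F) := by
  intro n
  induction n with
  | zero =>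
    intro w hcard h0 hpos _
    exfalso
    have hz : ∀ y ∈ F, w y = 0 := by
      intro y hy
      by_contra h
      have : 0 < (F.filter fun y => w y ≠ 0).card :=
        Finset.card_pos.2 ⟨y, Finset.mem_filter.2 ⟨hy, h⟩⟩
      omega
    rw [Finset.sum_eq_zero hz] at hpos
    exact lt_irrefl 0 hpos
  | succ n ih =>
    intro w hcard h0 hpos hlc
    by_cases hall : ∀ y ∈ F, w y ≠ 0 → l y ≤ c
    · rw [← Finset.centerMass_filter_ne_zero]
      apply Finset.centerMass_mem_convexHull
      · intro y hy; exact h0 y (Finset.mem_filter.1 hy).1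
      · rwa [Finset.sum_filter_ne_zero]
      · intro y hy
        rcases Finset.mem_filter.1 hy with ⟨hyF, hyw⟩
        exact Or.inl ⟨hyF, hall y hyF hyw⟩
    · push_neg at hall
      obtain ⟨q, hqF, hqw, hql⟩ := hall
      have hq0 : 0 < w q := (h0 q hqF).lt_of_ne (Ne.symm hqw)
      have hsum_l : ∑ y ∈ F, w y * l y ≤ (∑ y ∈ F, w y) * c := by
        have h1 := hlc
        rw [centerMass_map] at h1
        have h2 := mul_le_mul_of_nonneg_left h1 hpos.le
        rwa [← mul_assoc, mul_inv_cancel₀ hpos.ne', one_mul] at h2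
      obtain ⟨p, hpF, hpw, hpl⟩ : ∃ p ∈ F, w p ≠ 0 ∧ l p < c := by
        by_contra hno
        push_neg at hno
        have hlt : (∑ y ∈ F, w y) * c < ∑ y ∈ F, w y * l y := by
          rw [Finset.sum_mul]
          apply Finset.sum_lt_sum
          · intro y hy
            by_cases hy0 : w y = 0
            · simp [hy0]
            · exact mul_le_mul_of_nonneg_left (hno y hy hy0) (h0 y hy)
          · exact ⟨q, hqF, mul_lt_mul_of_pos_left hql hq0⟩
        linarith
      have hp0 : 0 < w p := (h0 p hpF).lt_of_ne (Ne.symm hpw)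
      have hpq : p ≠ q := fun h => absurd hpl (by rw [h]; exact not_lt.2 hql.le)
      set s : ℝ := (c - l p) / (l q - l p) with hs_def
      have hden : 0 < l q - l p := by linarith
      have hs0 : 0 < s := div_pos (by linarith) hden
      have hs1 : s < 1 := by rw [div_lt_one hden]; linarith
      have h1s : 0 < 1 - s := by linarith
      set e : E := (1 - s) • p + s • q with he_def
      have hle : l e = c := by
        rw [he_def, map_add, map_smul, map_smul, smul_eq_mul, smul_eq_mul, hs_def]
        field_simp
        ring
      have heC : e ∈ cutSet l c F := by
        refine Or.inr ⟨(p, q), ⟨⟨hpF, hqF⟩, hpl.le, hql⟩, ?_⟩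
        show p + s • (q - p) = e
        rw [he_def]; module
      set α : ℝ := min (w p / (1 - s)) (w q / s) with hα_def
      have hα0 : 0 < α := lt_min (div_pos hp0 h1s) (div_pos hq0 hs0)
      set δ : E → ℝ := fun y => if y = p then α * (1 - s) else if y = q then α * s else 0
        with hδ_def
      set w' : E → ℝ := fun y => w y - δ y with hw'_def
      have hδp : δ p = α * (1 - s) := by simp [hδ_def]
      have hδq : δ q = α * s := by simp [hδ_def, hpq.symm]
      have hδo : ∀ y, y ≠ p → y ≠ q → δ y = 0 := by
        intro y h1 h2; simp [hδ_def, h1, h2]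
      have hαp : α * (1 - s) ≤ w p := by
        calc α * (1 - s) ≤ (w p / (1 - s)) * (1 - s) :=
              mul_le_mul_of_nonneg_right (min_le_left _ _) h1s.le
          _ = w p := div_mul_cancel₀ _ h1s.ne'
      have hαq : α * s ≤ w q := by
        calc α * s ≤ (w q / s) * s :=
              mul_le_mul_of_nonneg_right (min_le_right _ _) hs0.le
          _ = w q := div_mul_cancel₀ _ hs0.ne'
      have hw'0 : ∀ y ∈ F, 0 ≤ w' y := by
        intro y hy
        rcases eq_or_ne y p with rfl | hyp
        · rw [hw'_def]; simp only [hδp]; linarith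
        rcases eq_or_ne y q with rfl | hyq
        · rw [hw'_def]; simp only [hδq]; linarith
        · rw [hw'_def]; simp only [hδo y hyp hyq]; linarith [h0 y hy]
      have hw'p_or : w' p = 0 ∨ w' q = 0 := by
        rcases min_choice (w p / (1 - s)) (w q / s) with h1 | h1
        · left
          show w p - δ p = 0
          rw [hδp, hα_def, h1, div_mul_cancel₀ _ h1s.ne']; ring
        · right
          show w q - δ q = 0
          rw [hδq, hα_def, h1, div_mul_cancel₀ _ hs0.ne']; ring
      have hδsum : ∑ y ∈ F, δ y = α := by
        have hfun : ∀ y, δ y = (if y = p then α * (1 - s) else 0) +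
            (if y = q then α * s else 0) := by
          intro y
          rcases eq_or_ne y p with rfl | hyp
          · simp [hδ_def, hpq]
          rcases eq_or_ne y q with rfl | hyq
          · simp [hδ_def, hpq.symm, hyp]
          · simp [hδ_def, hyp, hyq]
        rw [show (fun y => δ y) = _ from funext hfun] at *
        rw [Finset.sum_add_distrib, Finset.sum_ite_eq' F p, Finset.sum_ite_eq' F q,
          if_pos hpF, if_pos hqF]
        ring
      have hδvec : ∑ y ∈ F, δ y • y = α • e := by
        have hfun : ∀ y, δ y • y = (if y = p then (α * (1 - s)) • y else 0) +
            (if y = q then (α * s) • y else 0) := by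
          intro y
          rcases eq_or_ne y p with rfl | hyp
          · simp [hδp, hpq]
          rcases eq_or_ne y q with rfl | hyq
          · simp [hδq, hyp]
          · simp [hδo y hyp hyq, hyp, hyq]
        calc ∑ y ∈ F, δ y • y
            = ∑ y ∈ F, ((if y = p then (α * (1 - s)) • y else 0) +
                (if y = q then (α * s) • y else 0)) := Finset.sum_congr rfl fun y _ => hfun y
          _ = (α * (1 - s)) • p + (α * s) • q := by
              rw [Finset.sum_add_distrib, Finset.sum_ite_eq' F p, Finset.sum_ite_eq' F q,
                if_pos hpF, if_pos hqF]
          _ = α • e := by rw [he_def]; module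
      have hs' : ∑ y ∈ F, w' y = (∑ y ∈ F, w y) - α := by
        rw [hw'_def]
        rw [Finset.sum_sub_distrib, hδsum]
      have hv' : ∑ y ∈ F, w' y • y = (∑ y ∈ F, w y • y) - α • e := by
        have : ∀ y, w' y • y = w y • y - δ y • y := by
          intro y; rw [hw'_def]; simp [sub_smul]
        rw [show (fun y => w' y • y) = _ from funext this] at *
        rw [Finset.sum_sub_distrib, hδvec]
      have hsupp : (F.filter fun y => w' y ≠ 0).card ≤ n := by
        have hcard' : ∀ r, r ∈ F → w r ≠ 0 → w' r = 0 →
            (F.filter fun y => w' y ≠ 0).card ≤ n := by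
          intro r hrF hrw hr0
          have hsub : (F.filter fun y => w' y ≠ 0) ⊆
              (F.filter fun y => w y ≠ 0).erase r := by
            intro y hy
            rcases Finset.mem_filter.1 hy with ⟨hyF, hy0⟩
            refine Finset.mem_erase.2 ⟨fun h => hy0 (h ▸ hr0),
              Finset.mem_filter.2 ⟨hyF, fun hwy => hy0 ?_⟩⟩
            have hyp : y ≠ p := fun h => hpw (h ▸ hwy)
            have hyq : y ≠ q := fun h => hqw (h ▸ hwy)
            show w y - δ y = 0
            rw [hδo y hyp hyq, hwy]; ring
          have h1 := Finset.card_le_card hsub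
          have h2 := Finset.card_erase_of_mem
            (Finset.mem_filter.2 ⟨hrF, hrw⟩ : r ∈ F.filter fun y => w y ≠ 0)
          omega
        rcases hw'p_or with h | h
        · exact hcard' p hpF hpw h
        · exact hcard' q hqF hqw h
      have hσ'0 : 0 ≤ ∑ y ∈ F, w' y := Finset.sum_nonneg hw'0
      rcases hσ'0.eq_or_lt with hz | hpos'
      · -- all residual weights vanish: x = e
        have hall0 : ∀ y ∈ F, w' y = 0 :=
          (Finset.sum_eq_zero_iff_of_nonneg hw'0).1 hz.symm
        have hσα : (∑ y ∈ F, w y) = α := by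
          have := hs'
          rw [Finset.sum_eq_zero hall0] at this
          linarith
        have hV : ∑ y ∈ F, w y • y = α • e := by
          have h := hv'
          rw [Finset.sum_eq_zero (fun y hy => by rw [hall0 y hy, zero_smul])] at h
          exact (sub_eq_zero.1 h.symm)
        have : F.centerMass w id = e := by
          rw [Finset.centerMass]
          simp only [id]
          rw [hV, hσα, smul_smul, inv_mul_cancel₀ hα0.ne', one_smul]
        rw [this]
        exact subset_convexHull ℝ _ heC
      · -- recursive case
        have hσα : 0 < (∑ y ∈ F, w y) - α := by rw [← hs']; exact hpos'
        have hlx' : l (F.centerMass w' id) ≤ c := by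
          rw [centerMass_map]
          have hE : ∑ y ∈ F, w' y * l y = (∑ y ∈ F, w y * l y) - α * c := by
            have h := congrArg l hv'
            rw [map_sub, map_sum, map_sum, map_smul] at h
            simp only [map_smul, smul_eq_mul, hle] at h
            exact h
          rw [hE, hs', inv_mul_le_iff₀ hσα]
          nlinarith [hsum_l]
        have hx'mem := ih w' hsupp hw'0 hpos' hlx'
        have hxeq : F.centerMass w id =
            (((∑ y ∈ F, w y) - α) / (∑ y ∈ F, w y)) • F.centerMass w' id +
              (α / (∑ y ∈ F, w y)) • e := by
          rw [Finset.centerMass, Finset.centerMass]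
          simp only [id]
          rw [smul_smul]
          have hV : ∑ y ∈ F, w y • y = (∑ y ∈ F, w' y • y) + α • e := by
            rw [hv']; abel
          rw [hV, smul_add, hs']
          congr 1
          · congr 1
            field_simp
          · rw [smul_smul]
            congr 1
            field_simp
        rw [hxeq]
        refine (convex_convexHull ℝ (cutSet l c F)) hx'mem
          (subset_convexHull ℝ _ heC) (div_nonneg hσα.le hpos.le)
          (div_nonneg hα0.le hpos.le) ?_
        rw [← add_div, sub_add_cancel, div_self hpos.ne']

/-- Slicing a polytope by a half-space yields a polytope. -/
private theorem mySlice (l : E →ₗ[ℝ] ℝ) (c : ℝ) (F : Finset E) :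
    convexHull ℝ (F : Set E) ∩ {x | l x ≤ c} = convexHull ℝ (cutSet l c F) := by
  classical
  apply Set.Subset.antisymm
  · rintro x ⟨hx, hxc⟩
    obtain ⟨w, h0, h1, hx_eq⟩ := Finset.mem_convexHull.1 hx
    rw [← hx_eq]
    apply key l c F F.card w (Finset.card_filter_le _ _) h0 (by rw [h1]; norm_num)
    rw [hx_eq]; exact hxc
  · exact convexHull_min (cutSet_subset l c F)
      ((convex_convexHull ℝ _).inter (convex_halfSpace_le l.isLinear c))

/-- A (possibly empty) polytope: convex hull of a finite set. -/
private def PolyP (C : Set E) : Prop := ∃ F : Set E, F.Finite ∧ C = convexHull ℝ F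

private lemma PolyP.inter_halfspace {C : Set E} (h : PolyP C) (l : E →ₗ[ℝ] ℝ) (c : ℝ) :
    PolyP (C ∩ {x | l x ≤ c}) := by
  classical
  obtain ⟨F, hF, rfl⟩ := h
  refine ⟨cutSet l c hF.toFinset, cutSet_finite l c _, ?_⟩
  rw [← mySlice l c hF.toFinset, hF.coe_toFinset]

private lemma PolyP.inter_hyperplane {C : Set E} (h : PolyP C) (l : E →ₗ[ℝ] ℝ) (c : ℝ) :
    PolyP (C ∩ {x | l x = c}) := by
  have hset : {x : E | l x = c} = {x | l x ≤ c} ∩ {x | (-l) x ≤ -c} := by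
    ext x
    simp only [Set.mem_setOf_eq, Set.mem_inter_iff, LinearMap.neg_apply, neg_le_neg_iff]
    constructor
    · intro h; exact ⟨h.le, h.ge⟩
    · intro ⟨h1, h2⟩; exact le_antisymm h1 h2
  rw [hset, ← Set.inter_assoc]
  exact (h.inter_halfspace l c).inter_halfspace (-l) (-c)

private lemma PolyP.image {E' : Type*} [AddCommGroup E'] [Module ℝ E']
    {C : Set E} (h : PolyP C) (f : E →ₗ[ℝ] E') : PolyP (f '' C) := by
  obtain ⟨F, hF, rfl⟩ := h
  exact ⟨f '' F, hF.image f, by rw [f.image_convexHull]⟩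

end Slice

section Inter

variable {E : Type*} [AddCommGroup E] [Module ℝ E]

private lemma PolyP.prod {E' : Type*} [AddCommGroup E'] [Module ℝ E']
    {A : Set E} {B : Set E'} (hA : PolyP A) (hB : PolyP B) : PolyP (A ×ˢ B) := by
  obtain ⟨F, hF, rfl⟩ := hA
  obtain ⟨G, hG, rfl⟩ := hB
  exact ⟨F ×ˢ G, hF.prod hG, by rw [convexHull_prod]⟩

/-- Intersection of polytopes in `Fin d → ℝ` is a polytope. -/
private lemma PolyP.inter {d : ℕ} {A B : Set (Fin d → ℝ)}
    (hA : PolyP A) (hB : PolyP B) : PolyP (A ∩ B) := by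
  classical
  -- the diagonal functionals
  set L : Fin d → ((Fin d → ℝ) × (Fin d → ℝ)) →ₗ[ℝ] ℝ := fun i =>
    (LinearMap.proj i).comp (LinearMap.fst ℝ _ _) -
      (LinearMap.proj i).comp (LinearMap.snd ℝ _ _) with hL
  have key : ∀ s : Finset (Fin d),
      PolyP ((A ×ˢ B) ∩ {z : (Fin d → ℝ) × (Fin d → ℝ) | ∀ i ∈ s, L i z = 0}) := by
    intro s
    induction s using Finset.induction with
    | empty => simpa using hA.prod hB
    | insert _ _ hni ih =>
      rename_i i s
      have hset : {z : (Fin d → ℝ) × (Fin d → ℝ) | ∀ j ∈ insert i s, L j z = 0} =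
          {z | ∀ j ∈ s, L j z = 0} ∩ {z | L i z = 0} := by
        ext z
        simp only [Set.mem_setOf_eq, Set.mem_inter_iff, Finset.mem_insert]
        constructor
        · intro h
          exact ⟨fun j hj => h j (Or.inr hj), h i (Or.inl rfl)⟩
        · rintro ⟨h1, h2⟩ j (rfl | hj)
          · exact h2
          · exact h1 j hj
      rw [hset, ← Set.inter_assoc]
      exact ih.inter_hyperplane (L i) 0
  have hdiag := key Finset.univ
  have himg : (LinearMap.fst ℝ (Fin d → ℝ) (Fin d → ℝ)) ''
      ((A ×ˢ B) ∩ {z | ∀ i ∈ Finset.univ, L i z = 0}) = A ∩ B := by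
    ext x
    constructor
    · rintro ⟨⟨a, b⟩, ⟨⟨ha, hb⟩, hz⟩, rfl⟩
      have hab : a = b := by
        funext i
        have := hz i (Finset.mem_univ i)
        simpa [hL, sub_eq_zero] using this
      exact ⟨ha, hab ▸ hb⟩
    · rintro ⟨hxA, hxB⟩
      exact ⟨(x, x), ⟨⟨hxA, hxB⟩, fun i _ => by simp [hL]⟩, rfl⟩
  rw [← himg]
  exact hdiag.image _

end Inter

/-- Every element of `𝒦(X)` is a bounded polytope: the convex hull of a finite set. -/
theorem ptLattice_mem_is_polytope (d : ℕ) (X : Set (Fin d → ℝ)) :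
    ∀ C : Set (Fin d → ℝ), PtLattice X C →
      ∃ F : Set (Fin d → ℝ), F.Finite ∧ C = convexHull ℝ F := by
  intro C hC
  induction hC with
  | single hx => exact ⟨{_}, Set.finite_singleton _, (convexHull_singleton _).symm⟩
  | inter _ _ ihA ihB => exact PolyP.inter ihA ihB
  | join _ _ ihA ihB =>
    obtain ⟨F, hF, rfl⟩ := ihA
    obtain ⟨G, hG, rfl⟩ := ihB
    exact ⟨F ∪ G, hF.union hG, by
      rw [convexHull_convexHull_union_left, convexHull_convexHull_union_right]⟩
end
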